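/- Let a be an aperiodic Lusztig datum of type A^{(1)}_{l-1} with a ≠ a_0 (the all-zero datum). Then there exists p ∈ {0, 1, …, l-1} with ε_p(a) > 0. Explicitly: letting k_0 be the minimal k ≤ 0 with max{a_{k+s-1, s} : 1 ≤ s ≤ l} > 0 (indices read appropriately), aperiodicity yields p_0 with a_{k_0+p_0-1, p_0} = 0 and a_{k_0+p_0, p_0+1} > 0, and then A^{(p_0)}_{k_0+p_0}(a) = a_{k_0+p_0, p_0+1} > 0, so ε_{p_0}(a) > 0. -/

import Mathlib

/-- `A_k^{(p)}(a) = ∑_{s ≤ k} (a_{s,p+1} - a_{s-1,p})`; since `a_{i,j} = 0`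
for `j - i ≥ N`, all terms with `s < p + 1 - N` vanish and the sum equals the
finite sum over `p + 1 - N ≤ s ≤ k`. -/
noncomputable def Acoef (a : ℤ → ℤ → ℕ) (N : ℕ) (p k : ℤ) : ℤ :=
  ∑ s ∈ Finset.Icc (p + 1 - (N : ℤ)) k, ((a s (p + 1) : ℤ) - (a (s - 1) p : ℤ))

/-- `ε_p(a) = max {A_k^{(p)}(a) : k ≤ p}`. -/
noncomputable def epsP (a : ℤ → ℤ → ℕ) (N : ℕ) (p : ℤ) : ℤ :=
  sSup {A : ℤ | ∃ k : ℤ, k ≤ p ∧ A = Acoef a N p k}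

/-- `A_k^{*(p)}(a) = ∑_{t ≥ k+1} (a_{p,t} - a_{p+1,t+1})`; all terms with
`t > p + N` vanish, so the sum equals the finite sum over `k+1 ≤ t ≤ p + N`. -/
noncomputable def AstarCoef (a : ℤ → ℤ → ℕ) (N : ℕ) (p k : ℤ) : ℤ :=
  ∑ t ∈ Finset.Icc (k + 1) (p + (N : ℤ)), ((a p t : ℤ) - (a (p + 1) (t + 1) : ℤ))

/-- `ε_p^*(a) = max {A_k^{*(p)}(a) : k ≥ p}`. -/
noncomputable def epsStar (a : ℤ → ℤ → ℕ) (N : ℕ) (p : ℤ) : ℤ :=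
  sSup {A : ℤ | ∃ k : ℤ, p ≤ k ∧ A = AstarCoef a N p k}

private lemma per_mul (l : ℕ) (a : ℤ → ℤ → ℕ)
    (hper : ∀ i j : ℤ, a (i + (l : ℤ)) (j + (l : ℤ)) = a i j) :
    ∀ (m : ℤ) (i j : ℤ), a (i + (l : ℤ) * m) (j + (l : ℤ) * m) = a i j := by
  intro m
  induction m using Int.induction_on with
  | zero => simp
  | succ n ih =>
    intro i j
    have := hper (i + (l : ℤ) * n) (j + (l : ℤ) * n)
    rw [ih] at this
    rw [← this]
    ring_nf
  | pred n ih =>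
    intro i j
    have h2 := hper (i + (l : ℤ) * (-(n : ℤ) - 1)) (j + (l : ℤ) * (-(n : ℤ) - 1))
    rw [show (i + (l : ℤ) * (-(n:ℤ) - 1) + l) = i + (l:ℤ) * (-(n:ℤ)) by ring,
        show (j + (l : ℤ) * (-(n:ℤ) - 1) + l) = j + (l:ℤ) * (-(n:ℤ)) by ring] at h2
    rw [← h2]
    exact ih i j

/-- If `a` is an aperiodic Lusztig datum of type `A_{l-1}^{(1)}` which is not
the all-zero datum, then `ε_p(a) > 0` for some `p ∈ {0, 1, …, l-1}`. -/
theorem stmt14 (l : ℕ) (hl : 3 ≤ l) (a : ℤ → ℤ → ℕ) (N : ℕ) (hN : 0 < N)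
    (ha : ∀ i j : ℤ, (N : ℤ) ≤ j - i → a i j = 0)
    (hper : ∀ i j : ℤ, a (i + (l : ℤ)) (j + (l : ℤ)) = a i j)
    (hap : ∀ i j : ℤ, i < j → ∃ s : ℕ, s < l ∧ a (i + (s : ℤ)) (j + (s : ℤ)) = 0)
    (hne : ∃ i j : ℤ, i < j ∧ a i j ≠ 0) :
    ∃ p : ℤ, 0 ≤ p ∧ p < (l : ℤ) ∧ 0 < epsP a N p := by
  obtain ⟨i1, j1, hij1, hne1⟩ := hne
  -- D : the greatest diagonal distance with a nonzero entry
  obtain ⟨D, ⟨iD, hiD⟩, hDmax⟩ :=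
    Int.exists_greatest_of_bdd (P := fun d => ∃ i : ℤ, a i (i + d) ≠ 0)
      ⟨(N : ℤ), by
        rintro d ⟨i, hi⟩
        by_contra h
        exact hi (ha i (i + d) (by omega))⟩
      ⟨j1 - i1, i1, by simpa using hne1⟩
  have hD1 : 1 ≤ D := le_trans (by omega) (hDmax (j1 - i1) ⟨i1, by simpa using hne1⟩)
  have hDN : D ≤ (N : ℤ) - 1 := by
    by_contra h
    exact hiD (ha iD (iD + D) (by omega))
  -- vanishing above diagonal D
  have hvan : ∀ i j : ℤ, D < j - i → a i j = 0 := by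
    intro i j h
    by_contra h0
    have := hDmax (j - i) ⟨i, by simpa using h0⟩
    omega
  -- b s = a (s - D) s, the diagonal sequence
  set b : ℤ → ℕ := fun s => a (s - D) s with hb
  have hbper : ∀ (m : ℤ) (s : ℤ), b (s + (l : ℤ) * m) = b s := by
    intro m s
    have := per_mul l a hper m (s - D) s
    simpa [hb, show s + (l:ℤ)*m - D = s - D + (l:ℤ)*m by ring] using this
  have hb0 : b (iD + D) ≠ 0 := by
    simpa [hb] using hiD
  -- aperiodicity: some shift on this diagonal is zero
  obtain ⟨s, hsl, hs0⟩ := hap iD (iD + D) (by omega)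
  have hbz : b (iD + D + s) = 0 := by
    simpa [hb, show iD + D + (s:ℤ) - D = iD + (s:ℤ) by ring,
      show iD + D + (s:ℤ) = iD + (s:ℤ) + D by ring] using hs0
  -- find t with b t = 0 and b (t+1) ≠ 0
  have hbnz2 : b (iD + D + l) ≠ 0 := by
    have := hbper 1 (iD + D); rw [mul_one] at this; rw [this]; exact hb0
  obtain ⟨t, ⟨ht1, ht2, htz⟩, htmax⟩ :=
    Int.exists_greatest_of_bdd
      (P := fun m => iD + D + (s:ℤ) ≤ m ∧ m ≤ iD + D + (l:ℤ) ∧ b m = 0)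
      ⟨iD + D + (l:ℤ), by rintro z ⟨_, h, _⟩; exact h⟩
      ⟨iD + D + (s:ℤ), le_refl _, by omega, hbz⟩
  have htlt : t < iD + D + (l : ℤ) := lt_of_le_of_ne ht2 (by rintro rfl; exact hbnz2 htz)
  have hbt1 : b (t + 1) ≠ 0 := by
    intro h0
    have := htmax (t + 1) ⟨by omega, by omega, h0⟩
    omega
  -- reduce t mod l to p ∈ [0, l)
  have hl0 : 0 < (l : ℤ) := by omega
  set p : ℤ := t % (l : ℤ) with hp
  have hp0 : 0 ≤ p := Int.emod_nonneg t (by omega)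
  have hpl : p < (l : ℤ) := Int.emod_lt_of_pos t hl0
  have hteq : t = p + (l : ℤ) * (t / (l : ℤ)) := by
    rw [hp]; rw [Int.emod_def]; ring
  have hbp : b p = 0 := by
    have := hbper (t / (l:ℤ)) p
    rw [← hteq] at this; rw [this] at htz; exact htz
  have hbp1 : b (p + 1) ≠ 0 := by
    have := hbper (t / (l:ℤ)) (p + 1)
    rw [show p + 1 + (l:ℤ) * (t / (l:ℤ)) = t + 1 by omega] at this
    rw [← this]; exact hbt1
  -- the witness k
  set K : ℤ := p + 1 - D with hK
  have hKmem : K ∈ Finset.Icc (p + 1 - (N : ℤ)) K := by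
    simp only [Finset.mem_Icc]; omega
  -- compute Acoef a N p K
  have hAval : Acoef a N p K = (b (p + 1) : ℤ) := by
    rw [Acoef]
    rw [Finset.sum_eq_single_of_mem K hKmem]
    · have h1 : a (K - 1) p = 0 := by
        have : a (p - D) p = 0 := by simpa [hb] using hbp
        rw [show K - 1 = p - D by omega]; exact this
      rw [h1]
      have : a K (p + 1) = b (p + 1) := rfl
      rw [this]; push_cast; ring
    · intro s hs hsne
      simp only [Finset.mem_Icc] at hs
      have h1 : a s (p + 1) = 0 := hvan s (p + 1) (by omega)
      have h2 : a (s - 1) p = 0 := hvan (s - 1) p (by omega)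
      rw [h1, h2]; simp
  have hApos : 0 < Acoef a N p K := by
    rw [hAval]
    exact_mod_cast Nat.pos_of_ne_zero hbp1
  -- the set is bounded above
  have hbdd : BddAbove {A : ℤ | ∃ k : ℤ, k ≤ p ∧ A = Acoef a N p k} := by
    refine ⟨∑ s ∈ Finset.Icc (p + 1 - (N : ℤ)) p, (a s (p + 1) : ℤ), ?_⟩
    rintro A ⟨k, hk, rfl⟩
    calc Acoef a N p k ≤ ∑ s ∈ Finset.Icc (p + 1 - (N:ℤ)) k, (a s (p + 1) : ℤ) := by
          apply Finset.sum_le_sum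
          intro s _
          have : (0 : ℤ) ≤ a (s - 1) p := Int.natCast_nonneg _
          omega
      _ ≤ ∑ s ∈ Finset.Icc (p + 1 - (N:ℤ)) p, (a s (p + 1) : ℤ) := by
          apply Finset.sum_le_sum_of_subset_of_nonneg
          · intro x hx
            simp only [Finset.mem_Icc] at *
            omega
          · intro s _ _
            exact Int.natCast_nonneg _
  refine ⟨p, hp0, hpl, ?_⟩
  have hmem : Acoef a N p K ∈ {A : ℤ | ∃ k : ℤ, k ≤ p ∧ A = Acoef a N p k} :=
    ⟨K, by omega, rfl⟩
  exact lt_of_lt_of_le hApos (le_csSup hbdd hmem)
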